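/- Let α ∈ (0,1), and let h : [0,∞) → ℝ₊ be continuous and strictly increasing with h(0) = 0 and h(x₁) = 1/α for some x₁ > 0. Let R(r) = (1/α) 1_{[0,α)}(r), g(y) = R(1−y), R̄ = ∫₀¹ R = 1, and let g⁻¹ be the right-continuous inverse of g. Then the general equilibrium formula F*(x) = g⁻¹([R(1) + (R̄ − R(1)) h(x)] ∧ R(0)) evaluates to the two-point cdf F*(x) = (1−α) 1_{[0, x₁)}(x) + 1_{[x₁, ∞)}(x). -/

import Mathlib

open Set Filter Topology

/-- For the cut-off reward `R = (1/α)1_{[0,α)}`, the general mean field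
equilibrium formula evaluates to the two-point cdf
`F* = (1−α)1_{[0,x₁)} + 1_{[x₁,∞)}`. -/
theorem stmt17 (α : ℝ) (hα : α ∈ Set.Ioo (0:ℝ) 1)
    (h : ℝ → ℝ)
    (hhcont : ContinuousOn h (Set.Ici 0))
    (hhmono : StrictMonoOn h (Set.Ici 0))
    (hh0 : h 0 = 0)
    (x₁ : ℝ) (hx₁ : 0 < x₁) (hhx₁ : h x₁ = 1/α)
    (R g ginv : ℝ → ℝ)
    (hR : ∀ r, R r = if r < α then 1/α else 0)
    (hg : ∀ y, g y = R (1 - y))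
    (hinv : ∀ z, z ≠ g 1 → ginv z = sInf {y | y ∈ Set.Icc (0:ℝ) 1 ∧ z < g y})
    (hinv1 : ginv (g 1) = 1) :
    ∀ x ∈ Set.Ici (0:ℝ),
      ginv (min (R 1 + (1 - R 1) * h x) (R 0)) =
        if x < x₁ then 1 - α else 1 := by
  obtain ⟨hα0, hα1⟩ := hα
  have hαinv : (0:ℝ) < 1/α := by positivity
  have hR1 : R 1 = 0 := by rw [hR]; simp [not_lt.2 hα1.le]
  have hR0 : R 0 = 1/α := by rw [hR]; simp [hα0]
  have hg1 : g 1 = 1/α := by rw [hg]; simpa using hR0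
  intro x hx
  by_cases hxlt : x < x₁
  · have hhx_nonneg : 0 ≤ h x := by
      rcases eq_or_lt_of_le (Set.mem_Ici.mp hx : (0:ℝ) ≤ x) with h0 | h0
      · simp [← h0, hh0]
      · have := hhmono Set.self_mem_Ici hx h0
        linarith [hh0]
    have hhx_lt : h x < 1/α := by
      have := hhmono hx (le_of_lt (lt_of_le_of_lt (Set.mem_Ici.mp hx) hxlt) : x₁ ∈ Set.Ici 0) hxlt
      linarith [hhx₁]
    have hmin : min (R 1 + (1 - R 1) * h x) (R 0) = h x := by
      rw [hR1, hR0]; rw [min_eq_left (by linarith : 0 + (1-0) * h x ≤ 1/α)]; ring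
    rw [hmin, if_pos hxlt]
    rw [hinv _ (by rw [hg1]; exact ne_of_lt hhx_lt)]
    have hset : {y | y ∈ Set.Icc (0:ℝ) 1 ∧ h x < g y} = Set.Ioc (1-α) 1 := by
      ext y
      simp only [Set.mem_setOf_eq, Set.mem_Icc, Set.mem_Ioc, hg, hR]
      constructor
      · rintro ⟨⟨hy0, hy1⟩, hlt⟩
        refine ⟨?_, hy1⟩
        by_contra hcon
        push_neg at hcon
        rw [if_neg (by linarith)] at hlt
        linarith
      · rintro ⟨hy0, hy1⟩
        refine ⟨⟨by linarith, hy1⟩, ?_⟩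
        rw [if_pos (by linarith)]
        exact hhx_lt
    rw [hset, csInf_Ioc (by linarith : 1-α < 1)]
  · rw [if_neg hxlt]
    push_neg at hxlt
    have hhx_ge : 1/α ≤ h x := by
      rcases eq_or_lt_of_le hxlt with h0 | h0
      · rw [← h0]; exact hhx₁.ge
      · have := hhmono (hx₁.le : x₁ ∈ Set.Ici 0) (le_trans hx₁.le hxlt : x ∈ Set.Ici 0) h0
        linarith [hhx₁]
    have hmin : min (R 1 + (1 - R 1) * h x) (R 0) = g 1 := by
      rw [hR1, hR0, hg1]; rw [min_eq_right (by linarith : 1/α ≤ 0 + (1-0) * h x)]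
    rw [hmin, hinv1]
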